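/- Fix K ≥ 1 and a threshold γ ∈ ℝ. The acceptance region of Fisher's equally weighted statistic, namely the set { (z₁, …, z_K) ∈ ℝ^K : −∑_{k=1}^K log p(z_k) < γ }, where p(z) = 2(1 − Φ(|z|)), is a convex subset of ℝ^K. -/

import Mathlib

/-- The standard normal density φ(t) = (1/√(2π))·exp(−t²/2). -/
noncomputable def stdNormalPDF (t : ℝ) : ℝ :=
  (Real.sqrt (2 * Real.pi))⁻¹ * Real.exp (-t ^ 2 / 2)

/-- The standard normal cumulative distribution function Φ(t) = ∫_{−∞}^t φ(s) ds. -/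
noncomputable def stdNormalCDF (t : ℝ) : ℝ :=
  ∫ s in Set.Iic t, stdNormalPDF s

/-- The two-sided p-value function p(z) = 2(1 − Φ(|z|)). -/
noncomputable def pValue (z : ℝ) : ℝ := 2 * (1 - stdNormalCDF |z|)

open MeasureTheory Set Real Filter

lemma continuous_stdNormalPDF : Continuous stdNormalPDF := by
  unfold stdNormalPDF
  fun_prop

lemma stdNormalPDF_pos (t : ℝ) : 0 < stdNormalPDF t := by
  unfold stdNormalPDF
  positivity

lemma stdNormalPDF_eq (t : ℝ) :
    stdNormalPDF t = (Real.sqrt (2 * Real.pi))⁻¹ * Real.exp (-(1/2) * t ^ 2) := by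
  unfold stdNormalPDF; ring_nf

lemma integrable_stdNormalPDF : Integrable stdNormalPDF := by
  have h := (integrable_exp_neg_mul_sq (by norm_num : (0:ℝ) < 1/2)).const_mul
    (Real.sqrt (2 * Real.pi))⁻¹
  refine h.congr ?_
  filter_upwards with t
  rw [stdNormalPDF_eq]

lemma integral_stdNormalPDF : ∫ t, stdNormalPDF t = 1 := by
  have h2π : (0:ℝ) < 2 * Real.pi := by positivity
  have : ∫ t, stdNormalPDF t
      = (Real.sqrt (2 * Real.pi))⁻¹ * ∫ t : ℝ, Real.exp (-(1/2) * t ^ 2) := by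
    rw [← integral_const_mul]
    congr 1; funext t; rw [stdNormalPDF_eq]
  rw [this, integral_gaussian]
  have : Real.pi / (1/2) = 2 * Real.pi := by ring
  rw [this, inv_mul_cancel₀ (by positivity)]

lemma one_sub_cdf (t : ℝ) : 1 - stdNormalCDF t = ∫ s in Set.Ioi t, stdNormalPDF s := by
  have h := intervalIntegral.integral_Iic_add_Ioi (μ := volume) (b := t)
    integrable_stdNormalPDF.integrableOn integrable_stdNormalPDF.integrableOn
  rw [integral_stdNormalPDF] at h
  unfold stdNormalCDF
  linarith

lemma sf_pos (t : ℝ) : 0 < 1 - stdNormalCDF t := by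
  rw [one_sub_cdf]
  rw [setIntegral_pos_iff_support_of_nonneg_ae]
  · have : Function.support stdNormalPDF = Set.univ := by
      ext x; simp [Function.mem_support, (stdNormalPDF_pos x).ne']
    rw [this, Set.univ_inter, Real.volume_Ioi]
    simp
  · filter_upwards with x using (stdNormalPDF_pos x).le
  · exact integrable_stdNormalPDF.integrableOn

lemma hasDerivAt_cdf (t : ℝ) : HasDerivAt stdNormalCDF (stdNormalPDF t) t := by
  have key : ∀ u : ℝ, stdNormalCDF u = stdNormalCDF 0 + ∫ s in (0:ℝ)..u, stdNormalPDF s := by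
    intro u
    have := intervalIntegral.integral_Iic_sub_Iic (μ := volume) (a := (0:ℝ)) (b := u)
      integrable_stdNormalPDF.integrableOn integrable_stdNormalPDF.integrableOn
    unfold stdNormalCDF
    linarith
  have h1 : HasDerivAt (fun u => stdNormalCDF 0 + ∫ s in (0:ℝ)..u, stdNormalPDF s)
      (stdNormalPDF t) t := by
    refine HasDerivAt.const_add _ ?_
    exact intervalIntegral.integral_hasDerivAt_right
      (integrable_stdNormalPDF.intervalIntegrable)
      continuous_stdNormalPDF.aestronglyMeasurable.stronglyMeasurableAtFilter
      continuous_stdNormalPDF.continuousAt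
  exact h1.congr_of_eventuallyEq (by filter_upwards with u using (key u))

lemma hasDerivAt_pdf (t : ℝ) : HasDerivAt stdNormalPDF (-t * stdNormalPDF t) t := by
  have h : HasDerivAt (fun u : ℝ => -u ^ 2 / 2) (-t) t := by
    have := ((hasDerivAt_pow 2 t).neg).div_const 2
    simpa using this.congr_deriv (by ring)
  have := (h.exp).const_mul (Real.sqrt (2 * Real.pi))⁻¹
  unfold stdNormalPDF
  convert this using 1
  · rfl
  · rfl
  · ring

lemma tendsto_pdf_atTop : Tendsto stdNormalPDF atTop (nhds 0) := by
  have h1 : Tendsto (fun t : ℝ => -t ^ 2 / 2) atTop atBot := by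
    apply Tendsto.atBot_div_const (by norm_num)
    exact tendsto_neg_atTop_atBot.comp (tendsto_pow_atTop two_ne_zero)
  have h2 := Real.tendsto_exp_atBot.comp h1
  have h3 := h2.const_mul (Real.sqrt (2 * Real.pi))⁻¹
  show Tendsto (fun t => (Real.sqrt (2 * Real.pi))⁻¹ * Real.exp (-t ^ 2 / 2)) atTop (nhds 0)
  simpa only [Function.comp_def, mul_zero] using h3

lemma integral_id_mul_pdf {a : ℝ} (ha : 0 < a) :
    (∫ x in Set.Ioi a, x * stdNormalPDF x) = stdNormalPDF a ∧
      IntegrableOn (fun x => x * stdNormalPDF x) (Set.Ioi a) := by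
  have hderiv : ∀ x ∈ Set.Ici a, HasDerivAt (fun u => -stdNormalPDF u) (x * stdNormalPDF x) x :=
    fun x _ => by
      have h := (hasDerivAt_pdf x).neg; simp only [neg_mul, neg_neg] at h; exact h
  have hpos : ∀ x ∈ Set.Ioi a, 0 ≤ x * stdNormalPDF x := fun x hx =>
    mul_nonneg (le_of_lt (lt_trans ha hx)) (stdNormalPDF_pos x).le
  have htend : Tendsto (fun u => -stdNormalPDF u) atTop (nhds 0) := by
    simpa using tendsto_pdf_atTop.neg
  constructor
  · have := integral_Ioi_of_hasDerivAt_of_nonneg' hderiv hpos htend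
    simpa using this
  · exact integrableOn_Ioi_deriv_of_nonneg' hderiv hpos htend

lemma mills (t : ℝ) : t * (1 - stdNormalCDF t) ≤ stdNormalPDF t := by
  rcases le_or_gt t 0 with ht | ht
  · exact le_trans (mul_nonpos_of_nonpos_of_nonneg ht (sf_pos t).le) (stdNormalPDF_pos t).le
  · obtain ⟨hval, hint⟩ := integral_id_mul_pdf ht
    rw [one_sub_cdf]
    calc t * ∫ s in Set.Ioi t, stdNormalPDF s = ∫ s in Set.Ioi t, t * stdNormalPDF s := by
          rw [integral_const_mul]
      _ ≤ ∫ s in Set.Ioi t, s * stdNormalPDF s := by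
          apply setIntegral_mono_on
          · exact (integrable_stdNormalPDF.integrableOn).const_mul t
          · exact hint
          · exact measurableSet_Ioi
          · exact fun x hx => mul_le_mul_of_nonneg_right (le_of_lt hx) (stdNormalPDF_pos x).le
      _ = stdNormalPDF t := hval

noncomputable def negLogSF (t : ℝ) : ℝ := -Real.log (1 - stdNormalCDF t)

lemma hasDerivAt_negLogSF (t : ℝ) :
    HasDerivAt negLogSF (stdNormalPDF t / (1 - stdNormalCDF t)) t := by
  have hS : HasDerivAt (fun u => 1 - stdNormalCDF u) (-(stdNormalPDF t)) t := by
    simpa using (hasDerivAt_cdf t).const_sub 1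
  have := (hS.log (sf_pos t).ne').neg
  convert this using 1
  · rfl
  · rfl
  · rfl
  · field_simp

lemma hasDerivAt_deriv_negLogSF (t : ℝ) :
    HasDerivAt (fun u => stdNormalPDF u / (1 - stdNormalCDF u))
      ((stdNormalPDF t * stdNormalPDF t - t * stdNormalPDF t * (1 - stdNormalCDF t))
        / (1 - stdNormalCDF t) ^ 2) t := by
  have hS : HasDerivAt (fun u => 1 - stdNormalCDF u) (-(stdNormalPDF t)) t := by
    simpa using (hasDerivAt_cdf t).const_sub 1
  have := (hasDerivAt_pdf t).div hS (sf_pos t).ne'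
  convert this using 1
  · rfl
  · rfl
  · rfl
  · ring

lemma convexOn_negLogSF : ConvexOn ℝ Set.univ negLogSF := by
  refine convexOn_of_hasDerivWithinAt2_nonneg convex_univ
    (f' := fun u => stdNormalPDF u / (1 - stdNormalCDF u))
    (f'' := fun t => (stdNormalPDF t * stdNormalPDF t
      - t * stdNormalPDF t * (1 - stdNormalCDF t)) / (1 - stdNormalCDF t) ^ 2)
    ?_ ?_ ?_ ?_
  · exact fun x _ => (hasDerivAt_negLogSF x).continuousAt.continuousWithinAt
  · exact fun x _ => (hasDerivAt_negLogSF x).hasDerivWithinAt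
  · exact fun x _ => (hasDerivAt_deriv_negLogSF x).hasDerivWithinAt
  · intro x _
    apply div_nonneg _ (sq_nonneg _)
    have h1 : x * (1 - stdNormalCDF x) ≤ stdNormalPDF x := mills x
    nlinarith [stdNormalPDF_pos x]

lemma monotone_negLogSF : Monotone negLogSF := by
  apply monotone_of_deriv_nonneg (fun x => (hasDerivAt_negLogSF x).differentiableAt)
  intro x
  rw [(hasDerivAt_negLogSF x).deriv]
  exact div_nonneg (stdNormalPDF_pos x).le (sf_pos x).le

lemma convexOn_abs' : ConvexOn ℝ Set.univ (fun z : ℝ => |z|) := by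
  refine ⟨convex_univ, fun x _ y _ a b ha hb _ => ?_⟩
  simp only [smul_eq_mul]
  calc |a * x + b * y| ≤ |a * x| + |b * y| := abs_add_le _ _
    _ = a * |x| + b * |y| := by rw [abs_mul, abs_mul, abs_of_nonneg ha, abs_of_nonneg hb]

lemma convexOn_negLogSF_abs : ConvexOn ℝ Set.univ (fun z : ℝ => negLogSF |z|) := by
  have himg : (fun z : ℝ => |z|) '' Set.univ ⊆ Set.univ := Set.subset_univ _
  have hconv : Convex ℝ ((fun z : ℝ => |z|) '' Set.univ) := by
    have : (fun z : ℝ => |z|) '' Set.univ = Set.Ici 0 := by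
      ext x
      simp only [Set.image_univ, Set.mem_range, Set.mem_Ici]
      constructor
      · rintro ⟨y, rfl⟩; exact abs_nonneg y
      · intro hx; exact ⟨x, abs_of_nonneg hx⟩
    rw [this]; exact convex_Ici 0
  exact ConvexOn.comp (g := negLogSF) (f := fun z : ℝ => |z|)
    (convexOn_negLogSF.subset himg hconv) convexOn_abs' (monotone_negLogSF.monotoneOn _)

lemma negLog_pValue_eq (z : ℝ) :
    -Real.log (pValue z) = -Real.log 2 + negLogSF |z| := by
  unfold pValue negLogSF
  rw [Real.log_mul two_ne_zero (sf_pos _).ne']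
  ring

lemma convexOn_negLog_pValue : ConvexOn ℝ Set.univ (fun z : ℝ => -Real.log (pValue z)) := by
  have : (fun z : ℝ => -Real.log (pValue z)) = fun z => -Real.log 2 + negLogSF |z| :=
    funext negLog_pValue_eq
  rw [this]
  exact (convexOn_const _ convex_univ).add convexOn_negLogSF_abs

/-- For K ≥ 1 and γ ∈ ℝ, the acceptance region of Fisher's equally weighted statistic,
{ z ∈ ℝ^K : −∑_k log p(z_k) < γ }, is a convex subset of ℝ^K. -/
theorem stmt_4 (K : ℕ) (hK : 1 ≤ K) (γ : ℝ) :
    Convex ℝ {z : Fin K → ℝ | -∑ k, Real.log (pValue (z k)) < γ} := by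
  intro x hx y hy a b ha hb hab
  simp only [Set.mem_setOf_eq, ← Finset.sum_neg_distrib] at hx hy ⊢
  have key : ∀ k : Fin K, -Real.log (pValue ((a • x + b • y) k))
      ≤ a * (-Real.log (pValue (x k))) + b * (-Real.log (pValue (y k))) := by
    intro k
    have h := convexOn_negLog_pValue.2 (Set.mem_univ (x k)) (Set.mem_univ (y k)) ha hb hab
    simpa [smul_eq_mul] using h
  calc ∑ k, -Real.log (pValue ((a • x + b • y) k))
      ≤ ∑ k, (a * (-Real.log (pValue (x k))) + b * (-Real.log (pValue (y k)))) :=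
        Finset.sum_le_sum fun k _ => key k
    _ = a * (∑ k, -Real.log (pValue (x k))) + b * (∑ k, -Real.log (pValue (y k))) := by
        rw [Finset.sum_add_distrib, Finset.mul_sum, Finset.mul_sum]
    _ < γ := by
        have := (convex_Iio γ) hx hy ha hb hab
        simpa [smul_eq_mul] using this
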